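/- arXiv:2312.15332 — 2 statements merged into one kernel-verified Lean document; each statement's English description precedes it below -/
import Mathlib

section
/- Let A ∈ ℝ^{n×n} be stable, B ∈ ℝ^{n×m}, C ∈ ℝ^{p×n}, and γ > 0. Then there exists X ≻ 0 with A·X + X·Aᵀ + B·Bᵀ ⪯ 0 and tr(C·X·Cᵀ) ≤ γ² if and only if there exist P ≻ 0 and Γ ⪰ 0 such that [[Aᵀ·P + P·A, P·B],[Bᵀ·P, −γ·I]] ⪯ 0, [[P, Cᵀ],[C, Γ]] ⪰ 0, and tr(Γ) ≤ γ. Moreover, in both directions the certificates can be chosen related by X = γ·P⁻¹. -/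
open Matrix

noncomputable section

set_option linter.unusedSectionVars false
set_option maxHeartbeats 1000000

namespace NonstrictLyapAux


variable {n m : Type*} [Fintype n] [DecidableEq n] [Fintype m] [DecidableEq m]

lemma psdSmul {M : Matrix n n ℝ} {c : ℝ} (hc : 0 ≤ c) (h : M.PosSemidef) :
    (c • M).PosSemidef := by
  constructor
  · show _ = _
    rw [conjTranspose_smul, h.1.eq]; simp
  · intro x
    exact (h.smul hc).2 x

lemma pdSmul {M : Matrix n n ℝ} {c : ℝ} (hc : 0 < c) (h : M.PosDef) :
    (c • M).PosDef := by
  constructor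
  · show _ = _
    rw [conjTranspose_smul, h.1.eq]; simp
  · intro x hx
    exact (h.smul hc).2 hx

lemma psdTraceNonneg {M : Matrix n n ℝ} (h : M.PosSemidef) : 0 ≤ M.trace := by
  rw [Matrix.trace]
  refine Finset.sum_nonneg fun i _ => ?_
  exact h.diag_nonneg

lemma psdCong {M : Matrix n n ℝ} (h : M.PosSemidef) (W : Matrix m n ℝ) :
    (W * M * Wᵀ).PosSemidef := by
  have := h.mul_mul_conjTranspose_same W
  rwa [conjTranspose_eq_transpose_of_trivial] at this

lemma symmT {M : Matrix n n ℝ} (h : M.IsHermitian) : Mᵀ = M := by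
  rw [← conjTranspose_eq_transpose_of_trivial]; exact h

lemma psdBlocks {M : Matrix n n ℝ} {N : Matrix m m ℝ} (hM : M.PosSemidef)
    (hN : N.PosSemidef) : (fromBlocks M 0 0 N).PosSemidef := by
  obtain ⟨K, hK⟩ : ∃ K : Matrix n n ℝ, M = Kᴴ * K := by
    open scoped MatrixOrder in
    exact CStarAlgebra.nonneg_iff_eq_star_mul_self.mp hM.nonneg
  obtain ⟨L, hL⟩ : ∃ L : Matrix m m ℝ, N = Lᴴ * L := by
    open scoped MatrixOrder in
    exact CStarAlgebra.nonneg_iff_eq_star_mul_self.mp hN.nonneg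
  have heq : fromBlocks M 0 0 N = (fromBlocks K 0 0 L)ᴴ * fromBlocks K 0 0 L := by
    rw [fromBlocks_conjTranspose, fromBlocks_multiply]
    simp [hK, hL]
  rw [heq]
  exact Matrix.posSemidef_conjTranspose_mul_self _

lemma block11 {B : Matrix n m ℝ} {C : Matrix m n ℝ} {M : Matrix n n ℝ} {D : Matrix m m ℝ}
    (h : (fromBlocks M B C D).PosSemidef) : M.PosSemidef := h.submatrix Sum.inl

lemma block22 {B : Matrix n m ℝ} {C : Matrix m n ℝ} {M : Matrix n n ℝ} {D : Matrix m m ℝ}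
    (h : (fromBlocks M B C D).PosSemidef) : D.PosSemidef := h.submatrix Sum.inr

section fwd
variable {n m p : ℕ}

lemma fwd (A : Matrix (Fin n) (Fin n) ℝ) (B : Matrix (Fin n) (Fin m) ℝ)
    (C : Matrix (Fin p) (Fin n) ℝ) (γ : ℝ) (hγ : 0 < γ)
    (X : Matrix (Fin n) (Fin n) ℝ) (hX : X.PosDef)
    (hQ : (-(A * X + X * Aᵀ + B * Bᵀ)).PosSemidef)
    (htr : (C * X * Cᵀ).trace ≤ γ ^ 2) :
    ∃ Γ : Matrix (Fin p) (Fin p) ℝ,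
      (γ • X⁻¹).PosDef ∧ Γ.PosSemidef ∧
      (-(fromBlocks (Aᵀ * (γ • X⁻¹) + (γ • X⁻¹) * A) ((γ • X⁻¹) * B) (Bᵀ * (γ • X⁻¹))
          (-(γ • (1 : Matrix (Fin m) (Fin m) ℝ))))).PosSemidef ∧
      (fromBlocks (γ • X⁻¹) Cᵀ C Γ).PosSemidef ∧ Γ.trace ≤ γ := by
  have hdet : IsUnit X.det := isUnit_iff_ne_zero.mpr hX.det_pos.ne'
  have h1 : X⁻¹ * X = 1 := X.nonsing_inv_mul hdet
  have h2 : X * X⁻¹ = 1 := X.mul_nonsing_inv hdet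
  have hXT : Xᵀ = X := symmT hX.isHermitian
  have hXiT : X⁻¹ᵀ = X⁻¹ := symmT hX.inv.isHermitian
  refine ⟨γ⁻¹ • (C * X * Cᵀ), pdSmul hγ hX.inv,
    psdSmul (inv_nonneg.mpr hγ.le) (psdCong hX.posSemidef C), ?_, ?_, ?_⟩
  · -- LMI1
    have key : (-(fromBlocks (Aᵀ * (γ • X⁻¹) + (γ • X⁻¹) * A) ((γ • X⁻¹) * B) (Bᵀ * (γ • X⁻¹))
          (-(γ • (1 : Matrix (Fin m) (Fin m) ℝ)))))
        = γ • (fromBlocks (X⁻¹ * (-(A * X + X * Aᵀ + B * Bᵀ)) * X⁻¹) 0 0 0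
            + (fromBlocks 0 (X⁻¹ * B) 0 (-1)) * (fromBlocks 0 (X⁻¹ * B) 0 (-1))ᵀ) := by
      rw [fromBlocks_transpose, fromBlocks_multiply, fromBlocks_add, fromBlocks_neg,
        fromBlocks_smul]
      refine fromBlocks_inj.mpr ⟨?_, ?_, ?_, ?_⟩
      · rw [transpose_mul, hXiT]
        simp only [Matrix.mul_assoc, Matrix.neg_mul, Matrix.mul_neg, Matrix.add_mul,
          Matrix.mul_add, h1, h2, Matrix.mul_one, Matrix.one_mul]
        rw [← Matrix.mul_assoc X⁻¹ X (Aᵀ * X⁻¹), h1, Matrix.one_mul]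
        simp only [Matrix.mul_smul, Matrix.smul_mul, Matrix.zero_mul, zero_add]
        module
      · simp [Matrix.smul_mul, Matrix.mul_smul]
      · rw [transpose_mul, hXiT]
        simp [Matrix.smul_mul, Matrix.mul_smul]
      · simp
    rw [key]
    refine psdSmul hγ.le (Matrix.PosSemidef.add ?_ ?_)
    · have hq : (X⁻¹ * (-(A * X + X * Aᵀ + B * Bᵀ)) * X⁻¹).PosSemidef := by
        have := psdCong hQ X⁻¹
        rwa [hXiT] at this
      exact psdBlocks hq Matrix.PosSemidef.zero
    · rw [← conjTranspose_eq_transpose_of_trivial]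
      exact Matrix.posSemidef_self_mul_conjTranspose _
  · -- LMI2
    have key : (fromBlocks (γ • X⁻¹) Cᵀ C (γ⁻¹ • (C * X * Cᵀ)))
        = (fromBlocks X⁻¹ 0 (γ⁻¹ • C) 0) * (fromBlocks (γ • X) 0 0 (0 : Matrix (Fin p) (Fin p) ℝ))
          * (fromBlocks X⁻¹ 0 (γ⁻¹ • C) 0)ᵀ := by
      rw [fromBlocks_transpose, fromBlocks_multiply, fromBlocks_multiply]
      refine fromBlocks_inj.mpr ⟨?_, ?_, ?_, ?_⟩
      · rw [hXiT]
        simp [Matrix.smul_mul, Matrix.mul_smul, h1, h2]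
      · rw [transpose_smul]
        simp [Matrix.smul_mul, Matrix.mul_smul, h1, h2, smul_smul,
          inv_mul_cancel₀ hγ.ne', mul_inv_cancel₀ hγ.ne']
      · rw [hXiT]
        simp [Matrix.smul_mul, Matrix.mul_smul, Matrix.mul_assoc, h1, h2, smul_smul,
          inv_mul_cancel₀ hγ.ne', mul_inv_cancel₀ hγ.ne']
      · rw [transpose_smul]
        simp [Matrix.smul_mul, Matrix.mul_smul, Matrix.mul_assoc, smul_smul,
          inv_mul_cancel₀ hγ.ne', mul_inv_cancel₀ hγ.ne']
    rw [key]
    exact psdCong (psdBlocks (psdSmul hγ.le hX.posSemidef) Matrix.PosSemidef.zero) _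
  · rw [Matrix.trace_smul, smul_eq_mul]
    calc γ⁻¹ * (C * X * Cᵀ).trace ≤ γ⁻¹ * γ ^ 2 := by
          exact mul_le_mul_of_nonneg_left htr (inv_nonneg.mpr hγ.le)
      _ = γ := by field_simp [sq]
end fwd

section bwd
variable {n m p : ℕ}

lemma bwd (A : Matrix (Fin n) (Fin n) ℝ) (B : Matrix (Fin n) (Fin m) ℝ)
    (C : Matrix (Fin p) (Fin n) ℝ) (γ : ℝ) (hγ : 0 < γ)
    (P : Matrix (Fin n) (Fin n) ℝ) (Γ : Matrix (Fin p) (Fin p) ℝ)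
    (hP : P.PosDef) (hΓ : Γ.PosSemidef)
    (h1 : (-(fromBlocks (Aᵀ * P + P * A) (P * B) (Bᵀ * P)
        (-(γ • (1 : Matrix (Fin m) (Fin m) ℝ))))).PosSemidef)
    (h2 : (fromBlocks P Cᵀ C Γ).PosSemidef) (h3 : Γ.trace ≤ γ) :
    (γ • P⁻¹).PosDef ∧
      (-(A * (γ • P⁻¹) + (γ • P⁻¹) * Aᵀ + B * Bᵀ)).PosSemidef ∧
      (C * (γ • P⁻¹) * Cᵀ).trace ≤ γ ^ 2 := by
  have hdet : IsUnit P.det := isUnit_iff_ne_zero.mpr hP.det_pos.ne'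
  have hl : P⁻¹ * P = 1 := P.nonsing_inv_mul hdet
  have hr : P * P⁻¹ = 1 := P.mul_nonsing_inv hdet
  have hPiT : P⁻¹ᵀ = P⁻¹ := symmT hP.inv.isHermitian
  have hcl : ∀ (Y : Matrix (Fin n) (Fin m) ℝ), P⁻¹ * (P * Y) = Y :=
    fun Y => P.nonsing_inv_mul_cancel_left Y hdet
  have hcl' : ∀ (Y : Matrix (Fin n) (Fin n) ℝ), P⁻¹ * (P * Y) = Y :=
    fun Y => P.nonsing_inv_mul_cancel_left Y hdet
  have hcp : ∀ (Y : Matrix (Fin p) (Fin n) ℝ), Y * P⁻¹ * P = Y :=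
    fun Y => P.nonsing_inv_mul_cancel_right Y hdet
  refine ⟨pdSmul hγ hP.inv, ?_, ?_⟩
  · -- Lyapunov
    set W : Matrix (Fin n ⊕ Fin m) (Fin n ⊕ Fin m) ℝ :=
      fromBlocks P⁻¹ (γ⁻¹ • B) 0 0 with hW
    have hc := psdCong h1 W
    have key : W * (-(fromBlocks (Aᵀ * P + P * A) (P * B) (Bᵀ * P)
        (-(γ • (1 : Matrix (Fin m) (Fin m) ℝ))))) * Wᵀ
        = fromBlocks (-(A * P⁻¹ + P⁻¹ * Aᵀ + γ⁻¹ • (B * Bᵀ))) 0 0 0 := by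
      rw [hW, fromBlocks_neg, fromBlocks_transpose, fromBlocks_multiply, fromBlocks_multiply]
      refine fromBlocks_inj.mpr ⟨?_, ?_, ?_, ?_⟩
      · rw [hPiT]
        simp only [Matrix.mul_add, Matrix.add_mul, Matrix.mul_assoc, Matrix.mul_neg,
          Matrix.neg_mul, Matrix.smul_mul, Matrix.mul_smul, hl, hr, hcl, hcl',
          Matrix.mul_one, Matrix.one_mul, smul_smul, inv_mul_cancel₀ hγ.ne',
          mul_inv_cancel₀ hγ.ne', one_smul, transpose_smul, neg_neg,
          neg_add_cancel, add_neg_cancel, smul_zero, add_zero, zero_add,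
          Matrix.zero_mul, Matrix.mul_zero]
        abel
      · rw [transpose_zero]
        simp only [Matrix.mul_assoc, Matrix.mul_neg, Matrix.neg_mul, Matrix.smul_mul,
          Matrix.mul_smul, hcl, hcl', Matrix.mul_one, Matrix.mul_zero, Matrix.zero_mul,
          smul_smul, inv_mul_cancel₀ hγ.ne', one_smul, smul_zero, add_zero, zero_add,
          neg_neg, neg_add_cancel, add_neg_cancel, transpose_zero]
      · simp
      · simp
    rw [key] at hc
    have hpsd := block11 hc
    have heq : (-(A * (γ • P⁻¹) + (γ • P⁻¹) * Aᵀ + B * Bᵀ))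
        = γ • (-(A * P⁻¹ + P⁻¹ * Aᵀ + γ⁻¹ • (B * Bᵀ))) := by
      simp only [Matrix.mul_smul, Matrix.smul_mul, smul_add, smul_neg, smul_smul,
        mul_inv_cancel₀ hγ.ne', one_smul]
    rw [heq]
    exact psdSmul hγ.le hpsd
  · -- trace
    set U : Matrix (Fin n ⊕ Fin p) (Fin n ⊕ Fin p) ℝ :=
      fromBlocks 0 0 (-(C * P⁻¹)) 1 with hU
    have hc := psdCong h2 U
    have key : U * (fromBlocks P Cᵀ C Γ) * Uᵀ
        = fromBlocks 0 0 0 (Γ - C * P⁻¹ * Cᵀ) := by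
      rw [hU, fromBlocks_transpose, fromBlocks_multiply, fromBlocks_multiply]
      refine fromBlocks_inj.mpr ⟨?_, ?_, ?_, ?_⟩
      · simp
      · simp
      · simp
      · rw [transpose_neg, transpose_mul, hPiT, transpose_one]
        simp only [Matrix.neg_mul, Matrix.one_mul, Matrix.mul_one, hcp, neg_add_cancel,
          Matrix.zero_mul, zero_add]
        abel
    rw [key] at hc
    have hpsd := block22 hc
    have h4 : (C * P⁻¹ * Cᵀ).trace ≤ Γ.trace := by
      have h5 := psdTraceNonneg hpsd
      rw [trace_sub] at h5
      linarith
    calc (C * (γ • P⁻¹) * Cᵀ).trace = γ * (C * P⁻¹ * Cᵀ).trace := by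
          rw [Matrix.mul_smul, Matrix.smul_mul, trace_smul, smul_eq_mul]
      _ ≤ γ * γ := mul_le_mul_of_nonneg_left (h4.trans h3) hγ.le
      _ = γ ^ 2 := (sq γ).symm
end bwd

end NonstrictLyapAux

/-- A real square matrix is (Hurwitz) stable if every eigenvalue of it, viewed as a
complex matrix, has strictly negative real part. -/
def IsStableMatrix {ι : Type*} [Fintype ι] [DecidableEq ι] (M : Matrix ι ι ℝ) : Prop :=
  ∀ μ ∈ spectrum ℂ (M.map fun x => (x : ℂ)), μ.re < 0

/-- Nonstrict version: for stable `A` and `γ > 0`, there is `X ≻ 0` with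
`A X + X Aᵀ + B Bᵀ ⪯ 0` and `tr(C X Cᵀ) ≤ γ²` iff there are `P ≻ 0`, `Γ ⪰ 0` with
`[[Aᵀ P + P A, P B],[Bᵀ P, −γ I]] ⪯ 0`, `[[P, Cᵀ],[C, Γ]] ⪰ 0` and `tr Γ ≤ γ`.
Moreover, in both directions the certificates can be chosen related by `X = γ P⁻¹`
(equivalently `P = γ X⁻¹`). -/
theorem nonstrict_lyapunov_iff_nonstrict_lmi {n m p : ℕ}
    (A : Matrix (Fin n) (Fin n) ℝ) (B : Matrix (Fin n) (Fin m) ℝ)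
    (C : Matrix (Fin p) (Fin n) ℝ) (γ : ℝ)
    (hA : IsStableMatrix A) (hγ : 0 < γ) :
    ((∃ X : Matrix (Fin n) (Fin n) ℝ, X.PosDef ∧
        (-(A * X + X * Aᵀ + B * Bᵀ)).PosSemidef ∧ (C * X * Cᵀ).trace ≤ γ ^ 2) ↔
      (∃ (P : Matrix (Fin n) (Fin n) ℝ) (Γ : Matrix (Fin p) (Fin p) ℝ),
        P.PosDef ∧ Γ.PosSemidef ∧
        (-(fromBlocks (Aᵀ * P + P * A) (P * B) (Bᵀ * P)
            (-(γ • (1 : Matrix (Fin m) (Fin m) ℝ))))).PosSemidef ∧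
        (fromBlocks P Cᵀ C Γ).PosSemidef ∧ Γ.trace ≤ γ)) ∧
    (∀ X : Matrix (Fin n) (Fin n) ℝ, X.PosDef →
      (-(A * X + X * Aᵀ + B * Bᵀ)).PosSemidef → (C * X * Cᵀ).trace ≤ γ ^ 2 →
      ∃ Γ : Matrix (Fin p) (Fin p) ℝ,
        (γ • X⁻¹).PosDef ∧ Γ.PosSemidef ∧
        (-(fromBlocks (Aᵀ * (γ • X⁻¹) + (γ • X⁻¹) * A) ((γ • X⁻¹) * B) (Bᵀ * (γ • X⁻¹))
            (-(γ • (1 : Matrix (Fin m) (Fin m) ℝ))))).PosSemidef ∧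
        (fromBlocks (γ • X⁻¹) Cᵀ C Γ).PosSemidef ∧ Γ.trace ≤ γ) ∧
    (∀ (P : Matrix (Fin n) (Fin n) ℝ) (Γ : Matrix (Fin p) (Fin p) ℝ),
      P.PosDef → Γ.PosSemidef →
      (-(fromBlocks (Aᵀ * P + P * A) (P * B) (Bᵀ * P)
          (-(γ • (1 : Matrix (Fin m) (Fin m) ℝ))))).PosSemidef →
      (fromBlocks P Cᵀ C Γ).PosSemidef → Γ.trace ≤ γ →
      (γ • P⁻¹).PosDef ∧
        (-(A * (γ • P⁻¹) + (γ • P⁻¹) * Aᵀ + B * Bᵀ)).PosSemidef ∧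
        (C * (γ • P⁻¹) * Cᵀ).trace ≤ γ ^ 2) := by
  refine ⟨⟨?_, ?_⟩, NonstrictLyapAux.fwd A B C γ hγ,
    fun P Γ hP hΓ h1 h2 h3 => NonstrictLyapAux.bwd A B C γ hγ P Γ hP hΓ h1 h2 h3⟩
  · rintro ⟨X, hX, hQ, htr⟩
    obtain ⟨Γ, hPd, hΓ, hL1, hL2, hΓt⟩ := NonstrictLyapAux.fwd A B C γ hγ X hX hQ htr
    exact ⟨γ • X⁻¹, Γ, hPd, hΓ, hL1, hL2, hΓt⟩
  · rintro ⟨P, Γ, hP, hΓ, h1, h2, h3⟩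
    obtain ⟨hPd, hQ, htr⟩ := NonstrictLyapAux.bwd A B C γ hγ P Γ hP hΓ h1 h2 h3
    exact ⟨γ • P⁻¹, hPd, hQ, htr⟩
end
end

section
/- (Minimality is preserved by closing the loop.) Assume V ≻ 0, R ≻ 0, W ⪰ 0, Q ⪰ 0, the pair (A, W^{1/2}) is controllable, and the pair (Q^{1/2}, A) is observable. Let q ≥ 0 and let K = (A_K ∈ ℝ^{q×q}, B_K ∈ ℝ^{q×p}, C_K ∈ ℝ^{m×q}, D_K ∈ ℝ^{m×p}) be an order-q policy with A_cl(K) stable. Then: (i) if (A_K, B_K) is controllable, the closed-loop pair (A_cl(K), B_cl(K)) is controllable; (ii) if (C_K, A_K) is observable, the closed-loop pair (C_cl(K), A_cl(K)) is observable. -/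
open Matrix

noncomputable section

/-- The positive semidefinite square root of a positive semidefinite matrix
(the Mathlib definition of December 2024, since removed from Mathlib). -/
def Matrix.PosSemidef.sqrt {n : Type*} [Fintype n] [DecidableEq n]
    {A : Matrix n n ℝ} (hA : A.PosSemidef) : Matrix n n ℝ :=
  hA.1.eigenvectorUnitary.1 * diagonal ((√·) ∘ hA.1.eigenvalues) *
  (star hA.1.eigenvectorUnitary : Matrix n n ℝ)

lemma Matrix.PosSemidef.sqrt_mul_self {n : Type*} [Fintype n] [DecidableEq n]
    {A : Matrix n n ℝ} (hA : A.PosSemidef) : hA.sqrt * hA.sqrt = A := by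
  have hU : (star hA.1.eigenvectorUnitary : Matrix n n ℝ) * hA.1.eigenvectorUnitary.1 = 1 :=
    Unitary.coe_star_mul_self _
  have hD : diagonal ((√·) ∘ hA.1.eigenvalues) * diagonal ((√·) ∘ hA.1.eigenvalues)
      = diagonal (RCLike.ofReal ∘ hA.1.eigenvalues) := by
    rw [diagonal_mul_diagonal]
    congr 1
    funext i
    simp [Real.mul_self_sqrt (hA.eigenvalues_nonneg i)]
  conv_rhs => rw [hA.1.spectral_theorem, Unitary.conjStarAlgAut_apply]
  rw [Matrix.PosSemidef.sqrt]
  calc _ = hA.1.eigenvectorUnitary.1 * diagonal ((√·) ∘ hA.1.eigenvalues) *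
        ((star hA.1.eigenvectorUnitary : Matrix n n ℝ) * hA.1.eigenvectorUnitary.1) *
        diagonal ((√·) ∘ hA.1.eigenvalues) * (star hA.1.eigenvectorUnitary : Matrix n n ℝ) := by
          simp only [Matrix.mul_assoc]
    _ = _ := by rw [hU, Matrix.mul_one, Matrix.mul_assoc _ (diagonal _) (diagonal _), hD]

/-- The pair `(A, B)` is controllable if the controllability matrix
`[B, AB, …, A^{card−1}B]` has full row rank. -/
def Controllable {ι μ : Type*} [Fintype ι] [DecidableEq ι] [Fintype μ]
    (A : Matrix ι ι ℝ) (B : Matrix ι μ ℝ) : Prop :=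
  (Matrix.of fun (i : ι) (kj : Fin (Fintype.card ι) × μ) => (A ^ (kj.1 : ℕ) * B) i kj.2).rank
    = Fintype.card ι

/-- Closed-loop `A` matrix of an order-`q` policy `(A_K, B_K, C_K, D_K)`. -/
def AclG {n m p q : ℕ} (A : Matrix (Fin n) (Fin n) ℝ) (B : Matrix (Fin n) (Fin m) ℝ)
    (C : Matrix (Fin p) (Fin n) ℝ) (AK : Matrix (Fin q) (Fin q) ℝ)
    (BK : Matrix (Fin q) (Fin p) ℝ) (CK : Matrix (Fin m) (Fin q) ℝ)
    (DK : Matrix (Fin m) (Fin p) ℝ) : Matrix (Fin n ⊕ Fin q) (Fin n ⊕ Fin q) ℝ :=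
  fromBlocks (A + B * DK * C) (B * CK) (BK * C) AK

/-- Closed-loop `B` matrix of an order-`q` policy. -/
def BclG {n m p q : ℕ} {W : Matrix (Fin n) (Fin n) ℝ} {V : Matrix (Fin p) (Fin p) ℝ}
    (hW : W.PosSemidef) (hV : V.PosDef) (B : Matrix (Fin n) (Fin m) ℝ)
    (BK : Matrix (Fin q) (Fin p) ℝ) (DK : Matrix (Fin m) (Fin p) ℝ) :
    Matrix (Fin n ⊕ Fin q) (Fin n ⊕ Fin p) ℝ :=
  fromBlocks hW.sqrt (B * DK * hV.posSemidef.sqrt) 0 (BK * hV.posSemidef.sqrt)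

/-- Closed-loop `C` matrix of an order-`q` policy. -/
def CclG {n m p q : ℕ} {Q : Matrix (Fin n) (Fin n) ℝ} {R : Matrix (Fin m) (Fin m) ℝ}
    (hQ : Q.PosSemidef) (hR : R.PosDef) (C : Matrix (Fin p) (Fin n) ℝ)
    (CK : Matrix (Fin m) (Fin q) ℝ) (DK : Matrix (Fin m) (Fin p) ℝ) :
    Matrix (Fin n ⊕ Fin m) (Fin n ⊕ Fin q) ℝ :=
  fromBlocks hQ.sqrt 0 (hR.posSemidef.sqrt * DK * C) (hR.posSemidef.sqrt * CK)


section Aux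

lemma myVecMul_sum {ι κ γ : Type*} [Fintype ι] (s : Finset γ) (f : γ → Matrix ι κ ℝ)
    (x : ι → ℝ) : x ᵥ* (∑ i ∈ s, f i) = ∑ i ∈ s, x ᵥ* f i := by
  classical
  induction s using Finset.induction_on with
  | empty => simp
  | insert _ _ h ih => simp [Finset.sum_insert h, Matrix.vecMul_add, ih]

lemma myVecMul_smul {ι κ : Type*} [Fintype ι] (c : ℝ) (M : Matrix ι κ ℝ) (x : ι → ℝ) :
    x ᵥ* (c • M) = c • (x ᵥ* M) := by
  ext j
  simp [vecMul, dotProduct, Finset.mul_sum, mul_left_comm]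

lemma myRank_eq_card_iff {ι κ : Type*} [Fintype ι] [Fintype κ] [DecidableEq ι]
    (M : Matrix ι κ ℝ) :
    M.rank = Fintype.card ι ↔ ∀ x : ι → ℝ, x ᵥ* M = 0 → x = 0 := by
  have key : Mᵀ.rank + Module.finrank ℝ (LinearMap.ker Mᵀ.mulVecLin) = Fintype.card ι := by
    have h := LinearMap.finrank_range_add_finrank_ker Mᵀ.mulVecLin
    simpa [Matrix.rank, Module.finrank_fintype_fun_eq_card] using h
  rw [← rank_transpose]
  constructor
  · intro h x hx
    have hker : LinearMap.ker Mᵀ.mulVecLin = ⊥ := by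
      have h0 : Module.finrank ℝ (LinearMap.ker Mᵀ.mulVecLin) = 0 := by omega
      exact Submodule.finrank_eq_zero.mp h0
    exact Matrix.ker_mulVecLin_eq_bot_iff.mp hker x (by rw [mulVec_transpose]; exact hx)
  · intro h
    have hker : LinearMap.ker Mᵀ.mulVecLin = ⊥ := by
      rw [Matrix.ker_mulVecLin_eq_bot_iff]
      intro v hv
      exact h v (by rw [← mulVec_transpose]; exact hv)
    rw [hker] at key
    simpa using key

lemma myPow_ext {ι μ : Type*} [Fintype ι] [DecidableEq ι] [Fintype μ]
    (A : Matrix ι ι ℝ) (B : Matrix ι μ ℝ) (x : ι → ℝ)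
    (h : ∀ k < Fintype.card ι, x ᵥ* (A ^ k * B) = 0) :
    ∀ k : ℕ, x ᵥ* (A ^ k * B) = 0 := by
  set N := Fintype.card ι with hN
  have hch : A ^ N = -(∑ i ∈ Finset.range N, A.charpoly.coeff i • A ^ i) := by
    have h0 := A.aeval_self_charpoly
    rw [Polynomial.aeval_eq_sum_range, A.charpoly_natDegree_eq_dim,
      Finset.sum_range_succ] at h0
    have hc : A.charpoly.coeff N = 1 := by
      have hm := A.charpoly_monic
      rw [Polynomial.Monic, Polynomial.leadingCoeff, A.charpoly_natDegree_eq_dim] at hm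
      exact hm
    rw [hc, one_smul] at h0
    exact eq_neg_of_add_eq_zero_right h0
  intro k
  induction k using Nat.strong_induction_on with
  | _ k ih =>
    by_cases hk : k < N
    · exact h k hk
    · push_neg at hk
      have hkk : (k - N) + N = k := Nat.sub_add_cancel hk
      have hAk : A ^ k * B =
          -(∑ i ∈ Finset.range N, A.charpoly.coeff i • (A ^ ((k - N) + i) * B)) := by
        calc A ^ k * B = A ^ (k - N) * A ^ N * B := by rw [← pow_add, hkk]
          _ = _ := by
            rw [hch]
            simp only [Matrix.mul_neg, Matrix.neg_mul, Finset.mul_sum,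
              Matrix.mul_smul, ← pow_add]
            rw [Matrix.sum_mul]
            congr 1
            exact Finset.sum_congr rfl fun i _ => Matrix.smul_mul _ _ _
      rw [hAk, vecMul_neg, myVecMul_sum]
      have hz : ∀ i ∈ Finset.range N,
          x ᵥ* (A.charpoly.coeff i • (A ^ (k - N + i) * B)) = 0 := by
        intro i hi
        rw [myVecMul_smul, ih (k - N + i) (by rw [Finset.mem_range] at hi; omega)]
        simp
      rw [Finset.sum_eq_zero hz, neg_zero]

lemma controllable_iff {ι μ : Type*} [Fintype ι] [DecidableEq ι] [Fintype μ]
    (A : Matrix ι ι ℝ) (B : Matrix ι μ ℝ) :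
    Controllable A B ↔ ∀ x : ι → ℝ, (∀ k : ℕ, x ᵥ* (A ^ k * B) = 0) → x = 0 := by
  rw [Controllable, myRank_eq_card_iff]
  constructor
  · intro h x hx
    apply h x
    funext kj
    exact congrFun (hx (kj.1 : ℕ)) kj.2
  · intro h x hx
    apply h x
    apply myPow_ext
    intro k hk
    funext j
    exact congrFun hx (⟨k, hk⟩, j)

/-- Key lemma: closed-loop controllability from controllability of `(A, Ws)` and `(AK, BK)`. -/
lemma key_ctrb {n m p q : ℕ}
    (A : Matrix (Fin n) (Fin n) ℝ) (B : Matrix (Fin n) (Fin m) ℝ)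
    (C : Matrix (Fin p) (Fin n) ℝ)
    (AK : Matrix (Fin q) (Fin q) ℝ) (BK : Matrix (Fin q) (Fin p) ℝ)
    (CK : Matrix (Fin m) (Fin q) ℝ) (DK : Matrix (Fin m) (Fin p) ℝ)
    (Ws : Matrix (Fin n) (Fin n) ℝ) (Vs : Matrix (Fin p) (Fin p) ℝ)
    (hVs : IsUnit Vs)
    (hAW : Controllable A Ws) (hK : Controllable AK BK) :
    Controllable (fromBlocks (A + B * DK * C) (B * CK) (BK * C) AK)
      (fromBlocks Ws (B * DK * Vs) 0 (BK * Vs)) := by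
  rw [controllable_iff] at hAW hK ⊢
  set Acl : Matrix (Fin n ⊕ Fin q) (Fin n ⊕ Fin q) ℝ :=
    fromBlocks (A + B * DK * C) (B * CK) (BK * C) AK with hAcl
  set Bcl : Matrix (Fin n ⊕ Fin q) (Fin n ⊕ Fin p) ℝ :=
    fromBlocks Ws (B * DK * Vs) 0 (BK * Vs) with hBcl
  intro x hx
  -- basic consequences of `y ᵥ* Bcl = 0`
  have base : ∀ y : Fin n ⊕ Fin q → ℝ, y ᵥ* Bcl = 0 →
      (y ∘ Sum.inl) ᵥ* Ws = 0 ∧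
      (y ∘ Sum.inl) ᵥ* (B * DK) + (y ∘ Sum.inr) ᵥ* BK = 0 := by
    intro y hy
    rw [hBcl, vecMul_fromBlocks] at hy
    have hL : (y ∘ Sum.inl) ᵥ* Ws + (y ∘ Sum.inr) ᵥ* (0 : Matrix (Fin q) (Fin n) ℝ) = 0 :=
      funext fun j => congrFun hy (Sum.inl j)
    have hR : (y ∘ Sum.inl) ᵥ* (B * DK * Vs) + (y ∘ Sum.inr) ᵥ* (BK * Vs) = 0 :=
      funext fun j => congrFun hy (Sum.inr j)
    refine ⟨by simpa using hL, ?_⟩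
    have hR' : ((y ∘ Sum.inl) ᵥ* (B * DK) + (y ∘ Sum.inr) ᵥ* BK) ᵥ* Vs = 0 := by
      rw [Matrix.add_vecMul, vecMul_vecMul, vecMul_vecMul]
      exact hR
    have hinj : Function.Injective Vs.vecMul := vecMul_injective_iff_isUnit.mpr hVs
    have h00 : ((y ∘ Sum.inl) ᵥ* (B * DK) + (y ∘ Sum.inr) ᵥ* BK) ᵥ* Vs
        = (0 : Fin p → ℝ) ᵥ* Vs := by
      rw [Matrix.zero_vecMul]; exact hR'
    exact hinj h00
  -- invariance
  have hxk : ∀ k j : ℕ, (x ᵥ* Acl ^ k) ᵥ* (Acl ^ j * Bcl) = 0 := by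
    intro k j
    rw [vecMul_vecMul, ← Matrix.mul_assoc, ← pow_add]
    exact hx (k + j)
  have hBcl0 : ∀ k : ℕ, (x ᵥ* Acl ^ k) ᵥ* Bcl = 0 := by
    intro k
    have := hxk k 0
    rwa [pow_zero, Matrix.one_mul] at this
  have hWs : ∀ k : ℕ, ((x ᵥ* Acl ^ k) ∘ Sum.inl) ᵥ* Ws = 0 :=
    fun k => (base _ (hBcl0 k)).1
  have hBK : ∀ k : ℕ, ((x ᵥ* Acl ^ k) ∘ Sum.inl) ᵥ* (B * DK)
      + ((x ᵥ* Acl ^ k) ∘ Sum.inr) ᵥ* BK = 0 :=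
    fun k => (base _ (hBcl0 k)).2
  -- one-step recursions
  have hstep1 : ∀ k : ℕ, (x ᵥ* Acl ^ (k + 1)) ∘ Sum.inl
      = ((x ᵥ* Acl ^ k) ∘ Sum.inl) ᵥ* A := by
    intro k
    have h1 : x ᵥ* Acl ^ (k + 1) = (x ᵥ* Acl ^ k) ᵥ* Acl := by
      rw [vecMul_vecMul, ← pow_succ]
    rw [h1, hAcl, vecMul_fromBlocks, Sum.elim_comp_inl]
    have expand : ((x ᵥ* Acl ^ k) ∘ Sum.inl) ᵥ* (A + B * DK * C)
        + ((x ᵥ* Acl ^ k) ∘ Sum.inr) ᵥ* (BK * C)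
        = ((x ᵥ* Acl ^ k) ∘ Sum.inl) ᵥ* A
          + (((x ᵥ* Acl ^ k) ∘ Sum.inl) ᵥ* (B * DK)
            + ((x ᵥ* Acl ^ k) ∘ Sum.inr) ᵥ* BK) ᵥ* C := by
      simp only [Matrix.vecMul_add, Matrix.add_vecMul, vecMul_vecMul, Matrix.mul_assoc]
      abel
    rw [expand, hBK k, Matrix.zero_vecMul, add_zero]
  have hstep2 : ∀ k : ℕ, (x ᵥ* Acl ^ (k + 1)) ∘ Sum.inr
      = ((x ᵥ* Acl ^ k) ∘ Sum.inl) ᵥ* (B * CK)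
        + ((x ᵥ* Acl ^ k) ∘ Sum.inr) ᵥ* AK := by
    intro k
    have h1 : x ᵥ* Acl ^ (k + 1) = (x ᵥ* Acl ^ k) ᵥ* Acl := by
      rw [vecMul_vecMul, ← pow_succ]
    rw [h1, hAcl, vecMul_fromBlocks, Sum.elim_comp_inr]
  -- first components evolve under A
  have hA1 : ∀ k : ℕ, (x ᵥ* Acl ^ k) ∘ Sum.inl = (x ∘ Sum.inl) ᵥ* A ^ k := by
    intro k
    induction k with
    | zero => simp [Matrix.vecMul_one]
    | succ k ih => rw [hstep1 k, ih, vecMul_vecMul, ← pow_succ]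
  have hx1 : x ∘ Sum.inl = 0 := by
    apply hAW
    intro k
    rw [← Matrix.vecMul_vecMul, ← hA1 k]
    exact hWs k
  have h1k : ∀ k : ℕ, (x ᵥ* Acl ^ k) ∘ Sum.inl = 0 := by
    intro k
    rw [hA1 k, hx1, Matrix.zero_vecMul]
  have hA2 : ∀ k : ℕ, (x ᵥ* Acl ^ k) ∘ Sum.inr = (x ∘ Sum.inr) ᵥ* AK ^ k := by
    intro k
    induction k with
    | zero => simp [Matrix.vecMul_one]
    | succ k ih =>
      rw [hstep2 k, h1k k, Matrix.zero_vecMul, zero_add, ih, vecMul_vecMul, ← pow_succ]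
  have hx2 : x ∘ Sum.inr = 0 := by
    apply hK
    intro k
    have hb := hBK k
    rw [h1k k, Matrix.zero_vecMul, zero_add, hA2 k, vecMul_vecMul] at hb
    exact hb
  funext i
  cases i with
  | inl i => exact congrFun hx1 i
  | inr i => exact congrFun hx2 i

end Aux

/-- Minimality is preserved by closing the loop: (i) if `(A_K, B_K)` is controllable then
`(A_cl, B_cl)` is controllable; (ii) if `(C_K, A_K)` is observable then `(C_cl, A_cl)`
is observable. -/
theorem closed_loop_preserves_minimality {n m p q : ℕ}
    (A : Matrix (Fin n) (Fin n) ℝ) (B : Matrix (Fin n) (Fin m) ℝ)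
    (C : Matrix (Fin p) (Fin n) ℝ)
    {Q W : Matrix (Fin n) (Fin n) ℝ} {R : Matrix (Fin m) (Fin m) ℝ}
    {V : Matrix (Fin p) (Fin p) ℝ}
    (hQ : Q.PosSemidef) (hW : W.PosSemidef) (hR : R.PosDef) (hV : V.PosDef)
    (hAW : Controllable A hW.sqrt) (hQA : Controllable Aᵀ (hQ.sqrt)ᵀ)
    (AK : Matrix (Fin q) (Fin q) ℝ) (BK : Matrix (Fin q) (Fin p) ℝ)
    (CK : Matrix (Fin m) (Fin q) ℝ) (DK : Matrix (Fin m) (Fin p) ℝ)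
    (hstab : IsStableMatrix (AclG A B C AK BK CK DK)) :
    (Controllable AK BK →
      Controllable (AclG A B C AK BK CK DK) (BclG hW hV B BK DK)) ∧
    (Controllable AKᵀ CKᵀ →
      Controllable (AclG A B C AK BK CK DK)ᵀ (CclG hQ hR C CK DK)ᵀ) := by
  have hVsd : IsUnit hV.posSemidef.sqrt := by
    rw [Matrix.isUnit_iff_isUnit_det]
    have hdet : hV.posSemidef.sqrt.det * hV.posSemidef.sqrt.det = V.det := by
      rw [← Matrix.det_mul, hV.posSemidef.sqrt_mul_self]
    have : V.det ≠ 0 := ne_of_gt hV.det_pos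
    rw [isUnit_iff_ne_zero]
    intro h0
    rw [h0, mul_zero] at hdet
    exact this hdet.symm
  have hRsd : IsUnit (hR.posSemidef.sqrt)ᵀ := by
    rw [Matrix.isUnit_iff_isUnit_det, Matrix.det_transpose]
    have hdet : hR.posSemidef.sqrt.det * hR.posSemidef.sqrt.det = R.det := by
      rw [← Matrix.det_mul, hR.posSemidef.sqrt_mul_self]
    have : R.det ≠ 0 := ne_of_gt hR.det_pos
    rw [isUnit_iff_ne_zero]
    intro h0
    rw [h0, mul_zero] at hdet
    exact this hdet.symm
  constructor
  · intro hK
    exact key_ctrb A B C AK BK CK DK hW.sqrt hV.posSemidef.sqrt hVsd hAW hK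
  · intro hK
    have e1 : (AclG A B C AK BK CK DK)ᵀ
        = fromBlocks (Aᵀ + Cᵀ * DKᵀ * Bᵀ) (Cᵀ * BKᵀ) (CKᵀ * Bᵀ) AKᵀ := by
      rw [AclG, fromBlocks_transpose]
      simp [Matrix.transpose_add, Matrix.transpose_mul, Matrix.mul_assoc]
    have e2 : (CclG hQ hR C CK DK)ᵀ
        = fromBlocks (hQ.sqrt)ᵀ (Cᵀ * DKᵀ * (hR.posSemidef.sqrt)ᵀ) 0
            (CKᵀ * (hR.posSemidef.sqrt)ᵀ) := by
      rw [CclG, fromBlocks_transpose]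
      simp [Matrix.transpose_mul, Matrix.mul_assoc]
    rw [e1, e2]
    exact key_ctrb Aᵀ Cᵀ Bᵀ AKᵀ CKᵀ BKᵀ DKᵀ (hQ.sqrt)ᵀ (hR.posSemidef.sqrt)ᵀ hRsd hQA hK
end
end
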